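/- Let M ∈ [0, 2] and let ξ ∈ S_C(M). Then there exists ζ ∈ S_R(M) such that τ(ζ) = |τ(ξ)| and δ(ζ) = |δ(ξ)|; in particular, for any real β₀, β₁, β₂, E_U(ζ) = E_U(ξ). -/

import Mathlib

set_option maxHeartbeats 1600000
set_option maxRecDepth 8000

noncomputable section

/-- τ for complex 5-vectors (ξ₂, ξ₁, ξ₀, ξ₋₁, ξ₋₂). -/
def tauC (z2 z1 z0 zm1 zm2 : ℂ) : ℂ :=
  2 * ((starRingEnd ℂ) z2 * z1 + (starRingEnd ℂ) zm1 * zm2)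
    + (Real.sqrt 6 : ℂ) * ((starRingEnd ℂ) z1 * z0 + (starRingEnd ℂ) z0 * zm1)

/-- δ for complex 5-vectors. -/
def deltaC (z2 z1 z0 zm1 zm2 : ℂ) : ℂ :=
  2 * z2 * zm2 - 2 * z1 * zm1 + z0 ^ 2

/-- F_z for complex 5-vectors. -/
def FzC (z2 z1 z0 zm1 zm2 : ℂ) : ℝ :=
  2 * (‖z2‖ ^ 2 - ‖zm2‖ ^ 2)
    + ‖z1‖ ^ 2 - ‖zm1‖ ^ 2

/-- Membership in S_C(M): mass and magnetization constraints. -/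
def memSC (M : ℝ) (z2 z1 z0 zm1 zm2 : ℂ) : Prop :=
  ‖z2‖ ^ 2 + ‖z1‖ ^ 2 + ‖z0‖ ^ 2
      + ‖zm1‖ ^ 2 + ‖zm2‖ ^ 2 = 1 ∧
  2 * ‖z2‖ ^ 2 + ‖z1‖ ^ 2
      - ‖zm1‖ ^ 2 - 2 * ‖zm2‖ ^ 2 = M

/-- The uniform energy E_U. -/
def EU (b0 b1 b2 M : ℝ) (z2 z1 z0 zm1 zm2 : ℂ) : ℝ :=
  (1 / 2) * (b1 * ‖tauC z2 z1 z0 zm1 zm2‖ ^ 2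
    + (b2 / 5) * ‖deltaC z2 z1 z0 zm1 zm2‖ ^ 2
    + b0 + b1 * M ^ 2)


/- ==================== auxiliary machinery ==================== -/

def kkQm (ux uy uz s6 p1 p2 q1 q2 r1 r2 s1 s2 t1 t2 : ℝ) : ℝ :=
  -2*p1*q1*ux - 2*p1*q2*uy + 2*p1^2 - 2*p1^2*uz + 2*p2*q1*uy - 2*p2*q2*ux + 2*p2^2 - 2*p2^2*uz - q1*r1*s6*ux - q1*r2*s6*uy + 2*q1^2 - q1^2*uz + q2*r1*s6*uy - q2*r2*s6*ux + 2*q2^2 - q2^2*uz - r1*s1*s6*ux - r1*s2*s6*uy + 2*r1^2 + r2*s1*s6*uy - r2*s2*s6*ux + 2*r2^2 - 2*s1*t1*ux - 2*s1*t2*uy + 2*s1^2 + s1^2*uz + 2*s2*t1*uy - 2*s2*t2*ux + 2*s2^2 + s2^2*uz + 2*t1^2 + 2*t1^2*uz + 2*t2^2 + 2*t2^2*uz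

def kkBre (ux uy uz s6 yp1 yp2 yq1 yq2 yr1 yr2 ys1 ys2 yt1 yt2 p1 p2 q1 q2 r1 r2 s1 s2 t1 t2 : ℝ) : ℝ :=
  -p1*ux*yq1 - p1*uy*yq2 - 2*p1*uz*yp1 + 2*p1*yp1 - p2*ux*yq2 + p2*uy*yq1 - 2*p2*uz*yp2 + 2*p2*yp2 + (-1/2)*q1*s6*ux*yr1 + (-1/2)*q1*s6*uy*yr2 - q1*ux*yp1 + q1*uy*yp2 - q1*uz*yq1 + 2*q1*yq1 + (-1/2)*q2*s6*ux*yr2 + (1/2)*q2*s6*uy*yr1 - q2*ux*yp2 - q2*uy*yp1 - q2*uz*yq2 + 2*q2*yq2 + (-1/2)*r1*s6*ux*yq1 + (-1/2)*r1*s6*ux*ys1 + (1/2)*r1*s6*uy*yq2 + (-1/2)*r1*s6*uy*ys2 + 2*r1*yr1 + (-1/2)*r2*s6*ux*yq2 + (-1/2)*r2*s6*ux*ys2 + (-1/2)*r2*s6*uy*yq1 + (1/2)*r2*s6*uy*ys1 + 2*r2*yr2 + (-1/2)*s1*s6*ux*yr1 + (1/2)*s1*s6*uy*yr2 - s1*ux*yt1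 - s1*uy*yt2 + s1*uz*ys1 + 2*s1*ys1 + (-1/2)*s2*s6*ux*yr2 + (-1/2)*s2*s6*uy*yr1 - s2*ux*yt2 + s2*uy*yt1 + s2*uz*ys2 + 2*s2*ys2 - t1*ux*ys1 + t1*uy*ys2 + 2*t1*uz*yt1 + 2*t1*yt1 - t2*ux*ys2 - t2*uy*ys1 + 2*t2*uz*yt2 + 2*t2*yt2

def kkBim (ux uy uz s6 yp1 yp2 yq1 yq2 yr1 yr2 ys1 ys2 yt1 yt2 p1 p2 q1 q2 r1 r2 s1 s2 t1 t2 : ℝ) : ℝ :=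
  p1*ux*yq2 - p1*uy*yq1 + 2*p1*uz*yp2 - 2*p1*yp2 - p2*ux*yq1 - p2*uy*yq2 - 2*p2*uz*yp1 + 2*p2*yp1 + (1/2)*q1*s6*ux*yr2 + (-1/2)*q1*s6*uy*yr1 + q1*ux*yp2 + q1*uy*yp1 + q1*uz*yq2 - 2*q1*yq2 + (-1/2)*q2*s6*ux*yr1 + (-1/2)*q2*s6*uy*yr2 - q2*ux*yp1 + q2*uy*yp2 - q2*uz*yq1 + 2*q2*yq1 + (1/2)*r1*s6*ux*yq2 + (1/2)*r1*s6*ux*ys2 + (1/2)*r1*s6*uy*yq1 + (-1/2)*r1*s6*uy*ys1 - 2*r1*yr2 + (-1/2)*r2*s6*ux*yq1 + (-1/2)*r2*s6*ux*ys1 + (1/2)*r2*s6*uy*yq2 + (-1/2)*r2*s6*uy*ys2 + 2*r2*yr1 + (1/2)*s1*s6*ux*yr2 + (1/2)*s1*s6*uy*yr1 + s1*ux*yt2 - s1*uy*yt1 - s1*uz*ys2 - 2*s1*ys2 + (-1/2)*s2*s6*ux*yr1 + (1/2)*s2*s6*uy*yr2 - s2*ux*yt1 - s2*uy*yt2 +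 s2*uz*ys1 + 2*s2*ys1 + t1*ux*ys2 + t1*uy*ys1 - 2*t1*uz*yt2 - 2*t1*yt2 - t2*ux*ys1 + t2*uy*ys2 + 2*t2*uz*yt1 + 2*t2*yt1

lemma kk_bloch (ux uy uz x1 x2 y1 y2 : ℝ) (hu : ux^2+uy^2+uz^2 = 1) :
    ux*(2*(x1*y1+x2*y2)) + uy*(2*(x1*y2-x2*y1)) + uz*((x1^2+x2^2)-(y1^2+y2^2))
      ≤ (x1^2+x2^2)+(y1^2+y2^2) := by
  have hls : (ux*(2*(x1*y1+x2*y2)) + uy*(2*(x1*y2-x2*y1)) + uz*((x1^2+x2^2)-(y1^2+y2^2)))^2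
      + ((ux*(2*(x1*y2-x2*y1)) - uy*(2*(x1*y1+x2*y2)))^2
        + (ux*((x1^2+x2^2)-(y1^2+y2^2)) - uz*(2*(x1*y1+x2*y2)))^2
        + (uy*((x1^2+x2^2)-(y1^2+y2^2)) - uz*(2*(x1*y2-x2*y1)))^2)
      = (ux^2+uy^2+uz^2)*((x1^2+x2^2)+(y1^2+y2^2))^2 := by ring
  rw [hu] at hls
  have hkey : (ux*(2*(x1*y1+x2*y2)) + uy*(2*(x1*y2-x2*y1)) + uz*((x1^2+x2^2)-(y1^2+y2^2)))^2
      ≤ ((x1^2+x2^2)+(y1^2+y2^2))^2 := by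
    nlinarith [sq_nonneg (ux*(2*(x1*y2-x2*y1)) - uy*(2*(x1*y1+x2*y2))),
      sq_nonneg (ux*((x1^2+x2^2)-(y1^2+y2^2)) - uz*(2*(x1*y1+x2*y2))),
      sq_nonneg (uy*((x1^2+x2^2)-(y1^2+y2^2)) - uz*(2*(x1*y2-x2*y1))), hls]
  nlinarith [hkey, sq_nonneg (x1^2+x2^2+y1^2+y2^2)]

lemma kk_qm_nonneg (ux uy uz s6 : ℝ) (hu : ux^2+uy^2+uz^2 = 1) (hs6 : s6^2 = 6)
    (p1 p2 q1 q2 r1 r2 s1 s2 t1 t2 : ℝ) :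
    0 ≤ kkQm ux uy uz s6 p1 p2 q1 q2 r1 r2 s1 s2 t1 t2 := by
  have g0 := kk_bloch ux uy uz s1 s2 (2*t1) (2*t2) hu
  have g1 := kk_bloch ux uy uz (2*r1) (2*r2) (s6*s1) (s6*s2) hu
  have g2 := kk_bloch ux uy uz (s6*q1) (s6*q2) (2*r1) (2*r2) hu
  have g3 := kk_bloch ux uy uz (2*p1) (2*p2) q1 q2 hu
  have hQ : kkQm ux uy uz s6 p1 p2 q1 q2 r1 r2 s1 s2 t1 t2 =
      (1/2)*((((s1)^2+(s2)^2)+((2*t1)^2+(2*t2)^2)) - (ux*(2*((s1)*(2*t1)+(s2)*(2*t2))) + uy*(2*((s1)*(2*t2)-(s2)*(2*t1))) + uz*(((s1)^2+(s2)^2)-((2*t1)^2+(2*t2)^2))))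
      + (1/4)*((((2*r1)^2+(2*r2)^2)+((s6*s1)^2+(s6*s2)^2)) - (ux*(2*((2*r1)*(s6*s1)+(2*r2)*(s6*s2))) + uy*(2*((2*r1)*(s6*s2)-(2*r2)*(s6*s1))) + uz*(((2*r1)^2+(2*r2)^2)-((s6*s1)^2+(s6*s2)^2))))
      + (1/4)*((((s6*q1)^2+(s6*q2)^2)+((2*r1)^2+(2*r2)^2)) - (ux*(2*((s6*q1)*(2*r1)+(s6*q2)*(2*r2))) + uy*(2*((s6*q1)*(2*r2)-(s6*q2)*(2*r1))) + uz*(((s6*q1)^2+(s6*q2)^2)-((2*r1)^2+(2*r2)^2))))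
      + (1/2)*((((2*p1)^2+(2*p2)^2)+((q1)^2+(q2)^2)) - (ux*(2*((2*p1)*(q1)+(2*p2)*(q2))) + uy*(2*((2*p1)*(q2)-(2*p2)*(q1))) + uz*(((2*p1)^2+(2*p2)^2)-((q1)^2+(q2)^2)))) := by
    simp only [kkQm]
    linear_combination ((-1/4)*q1^2 + (1/4)*q1^2*uz + (-1/4)*q2^2 + (1/4)*q2^2*uz + (-1/4)*s1^2 + (-1/4)*s1^2*uz + (-1/4)*s2^2 + (-1/4)*s2^2*uz) * hs6
  linarith [g0, g1, g2, g3, hQ]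

lemma kk_disc (a b c : ℝ) (ha : 0 ≤ a) (h : ∀ t : ℝ, 0 ≤ a*t^2 + 2*b*t + c) :
    b^2 ≤ a*c := by
  rcases eq_or_lt_of_le ha with ha0 | hapos
  · by_cases hb : b = 0
    · rw [hb, ← ha0]; simp
    · exfalso
      have h2b : (2*b) ≠ 0 := mul_ne_zero two_ne_zero hb
      have ht := h (-(c+1)/(2*b))
      rw [← ha0] at ht
      have hval : 2*b*(-(c+1)/(2*b)) = -(c+1) := by
        rw [mul_comm]; exact div_mul_cancel₀ _ h2b
      nlinarith [ht, hval]
  · have ht := h (-(b/a))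
    have hval : a*(-(b/a))^2 + 2*b*(-(b/a)) + c = c - b^2/a := by
      field_simp; ring
    rw [hval] at ht
    have h2 : b^2/a ≤ c := by linarith
    have h3 : b^2 = (b^2/a)*a := by field_simp
    nlinarith [h2, h3, hapos]

lemma kk_expand (ux uy uz s6 t f1 f2 yp1 yp2 yq1 yq2 yr1 yr2 ys1 ys2 yt1 yt2
    p1 p2 q1 q2 r1 r2 s1 s2 t1 t2 : ℝ) :
    kkQm ux uy uz s6 (t*((f1)*yp1 - (f2)*yp2) + p1) (t*((f1)*yp2 + (f2)*yp1) + p2) (t*((f1)*yq1 - (f2)*yq2) + q1) (t*((f1)*yq2 + (f2)*yq1) + q2) (t*((f1)*yr1 - (f2)*yr2) + r1) (t*((f1)*yr2 + (f2)*yr1) + r2) (t*((f1)*ys1 - (f2)*ys2) + s1) (t*((f1)*ys2 + (f2)*ys1) + s2) (t*((f1)*yt1 - (f2)*yt2) + t1) (t*((f1)*yt2 + (f2)*yt1) + t2) =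
      (f1^2+f2^2) * kkQm ux uy uz s6 yp1 yp2 yq1 yq2 yr1 yr2 ys1 ys2 yt1 yt2 * t^2
      + 2*t*(f1 * (kkBre ux uy uz s6 yp1 yp2 yq1 yq2 yr1 yr2 ys1 ys2 yt1 yt2 p1 p2 q1 q2 r1 r2 s1 s2 t1 t2) + f2 * (kkBim ux uy uz s6 yp1 yp2 yq1 yq2 yr1 yr2 ys1 ys2 yt1 yt2 p1 p2 q1 q2 r1 r2 s1 s2 t1 t2))
      + kkQm ux uy uz s6 p1 p2 q1 q2 r1 r2 s1 s2 t1 t2 := by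
  simp only [kkQm, kkBre, kkBim]; ring

lemma kk_cs (ux uy uz s6 : ℝ) (hu : ux^2+uy^2+uz^2 = 1) (hs6 : s6^2 = 6)
    (yp1 yp2 yq1 yq2 yr1 yr2 ys1 ys2 yt1 yt2 p1 p2 q1 q2 r1 r2 s1 s2 t1 t2 : ℝ) :
    (kkBre ux uy uz s6 yp1 yp2 yq1 yq2 yr1 yr2 ys1 ys2 yt1 yt2 p1 p2 q1 q2 r1 r2 s1 s2 t1 t2)^2 + (kkBim ux uy uz s6 yp1 yp2 yq1 yq2 yr1 yr2 ys1 ys2 yt1 yt2 p1 p2 q1 q2 r1 r2 s1 s2 t1 t2)^2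
      ≤ kkQm ux uy uz s6 yp1 yp2 yq1 yq2 yr1 yr2 ys1 ys2 yt1 yt2 * kkQm ux uy uz s6 p1 p2 q1 q2 r1 r2 s1 s2 t1 t2 := by
  have hQy := kk_qm_nonneg ux uy uz s6 hu hs6 yp1 yp2 yq1 yq2 yr1 yr2 ys1 ys2 yt1 yt2
  have hQx := kk_qm_nonneg ux uy uz s6 hu hs6 p1 p2 q1 q2 r1 r2 s1 s2 t1 t2
  by_cases hb : (kkBre ux uy uz s6 yp1 yp2 yq1 yq2 yr1 yr2 ys1 ys2 yt1 yt2 p1 p2 q1 q2 r1 r2 s1 s2 t1 t2)^2 + (kkBim ux uy uz s6 yp1 yp2 yq1 yq2 yr1 yr2 ys1 ys2 yt1 yt2 p1 p2 q1 q2 r1 r2 s1 s2 t1 t2)^2 = 0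
  · rw [hb]; exact mul_nonneg hQy hQx
  · have hbpos : 0 < (kkBre ux uy uz s6 yp1 yp2 yq1 yq2 yr1 yr2 ys1 ys2 yt1 yt2 p1 p2 q1 q2 r1 r2 s1 s2 t1 t2)^2 + (kkBim ux uy uz s6 yp1 yp2 yq1 yq2 yr1 yr2 ys1 ys2 yt1 yt2 p1 p2 q1 q2 r1 r2 s1 s2 t1 t2)^2 :=
      lt_of_le_of_ne (by positivity) (Ne.symm hb)
    set nb := Real.sqrt ((kkBre ux uy uz s6 yp1 yp2 yq1 yq2 yr1 yr2 ys1 ys2 yt1 yt2 p1 p2 q1 q2 r1 r2 s1 s2 t1 t2)^2 + (kkBim ux uy uz s6 yp1 yp2 yq1 yq2 yr1 yr2 ys1 ys2 yt1 yt2 p1 p2 q1 q2 r1 r2 s1 s2 t1 t2)^2) with hnbd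
    have hnbpos : 0 < nb := Real.sqrt_pos.mpr hbpos
    have hnbne : nb ≠ 0 := ne_of_gt hnbpos
    have hnb2 : nb^2 = (kkBre ux uy uz s6 yp1 yp2 yq1 yq2 yr1 yr2 ys1 ys2 yt1 yt2 p1 p2 q1 q2 r1 r2 s1 s2 t1 t2)^2 + (kkBim ux uy uz s6 yp1 yp2 yq1 yq2 yr1 yr2 ys1 ys2 yt1 yt2 p1 p2 q1 q2 r1 r2 s1 s2 t1 t2)^2 :=
      Real.sq_sqrt (le_of_lt hbpos)
    have hAll : ∀ t : ℝ, 0 ≤ kkQm ux uy uz s6 yp1 yp2 yq1 yq2 yr1 yr2 ys1 ys2 yt1 yt2 * t^2 + 2*nb*t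
        + kkQm ux uy uz s6 p1 p2 q1 q2 r1 r2 s1 s2 t1 t2 := by
      intro t
      have hpos := kk_qm_nonneg ux uy uz s6 hu hs6 (t*(((kkBre ux uy uz s6 yp1 yp2 yq1 yq2 yr1 yr2 ys1 ys2 yt1 yt2 p1 p2 q1 q2 r1 r2 s1 s2 t1 t2)/nb)*yp1 - ((kkBim ux uy uz s6 yp1 yp2 yq1 yq2 yr1 yr2 ys1 ys2 yt1 yt2 p1 p2 q1 q2 r1 r2 s1 s2 t1 t2)/nb)*yp2) + p1) (t*(((kkBre ux uy uz s6 yp1 yp2 yq1 yq2 yr1 yr2 ys1 ys2 yt1 yt2 p1 p2 q1 q2 r1 r2 s1 s2 t1 t2)/nb)*yp2 + ((kkBim ux uy uz s6 yp1 yp2 yq1 yq2 yr1 yr2 ys1 ys2 yt1 yt2 p1 p2 q1 q2 r1 r2 s1 s2 t1 t2)/nb)*yp1) + p2) (t*(((kkBre ux uy uz s6 yp1 yp2 yq1 yq2 yr1 yr2 ys1 ys2 yt1 yt2 p1 p2 q1 q2 r1 r2 s1 s2 t1 t2)/nb)*yq1 - ((kkBim ux uy uz s6 yp1 yp2 yq1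 yq2 yr1 yr2 ys1 ys2 yt1 yt2 p1 p2 q1 q2 r1 r2 s1 s2 t1 t2)/nb)*yq2) + q1) (t*(((kkBre ux uy uz s6 yp1 yp2 yq1 yq2 yr1 yr2 ys1 ys2 yt1 yt2 p1 p2 q1 q2 r1 r2 s1 s2 t1 t2)/nb)*yq2 + ((kkBim ux uy uz s6 yp1 yp2 yq1 yq2 yr1 yr2 ys1 ys2 yt1 yt2 p1 p2 q1 q2 r1 r2 s1 s2 t1 t2)/nb)*yq1) + q2) (t*(((kkBre ux uy uz s6 yp1 yp2 yq1 yq2 yr1 yr2 ys1 ys2 yt1 yt2 p1 p2 q1 q2 r1 r2 s1 s2 t1 t2)/nb)*yr1 - ((kkBim ux uy uz s6 yp1 yp2 yq1 yq2 yr1 yr2 ys1 ys2 yt1 yt2 p1 p2 q1 q2 r1 r2 s1 s2 t1 t2)/nb)*yr2) + r1) (t*(((kkBre ux uy uz s6 yp1 yp2 yq1 yq2 yr1 yr2 ys1 ys2 yt1 yt2 p1 p2 q1 q2 r1 r2 s1 s2 t1 t2)/nb)*yr2 + ((kkBim ux uy uz s6 yp1 yp2 yq1 yq2 yr1 yr2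 ys1 ys2 yt1 yt2 p1 p2 q1 q2 r1 r2 s1 s2 t1 t2)/nb)*yr1) + r2) (t*(((kkBre ux uy uz s6 yp1 yp2 yq1 yq2 yr1 yr2 ys1 ys2 yt1 yt2 p1 p2 q1 q2 r1 r2 s1 s2 t1 t2)/nb)*ys1 - ((kkBim ux uy uz s6 yp1 yp2 yq1 yq2 yr1 yr2 ys1 ys2 yt1 yt2 p1 p2 q1 q2 r1 r2 s1 s2 t1 t2)/nb)*ys2) + s1) (t*(((kkBre ux uy uz s6 yp1 yp2 yq1 yq2 yr1 yr2 ys1 ys2 yt1 yt2 p1 p2 q1 q2 r1 r2 s1 s2 t1 t2)/nb)*ys2 + ((kkBim ux uy uz s6 yp1 yp2 yq1 yq2 yr1 yr2 ys1 ys2 yt1 yt2 p1 p2 q1 q2 r1 r2 s1 s2 t1 t2)/nb)*ys1) + s2) (t*(((kkBre ux uy uz s6 yp1 yp2 yq1 yq2 yr1 yr2 ys1 ys2 yt1 yt2 p1 p2 q1 q2 r1 r2 s1 s2 t1 t2)/nb)*yt1 - ((kkBim ux uy uz s6 yp1 yp2 yq1 yq2 yr1 yr2 ys1 ys2 yt1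 yt2 p1 p2 q1 q2 r1 r2 s1 s2 t1 t2)/nb)*yt2) + t1) (t*(((kkBre ux uy uz s6 yp1 yp2 yq1 yq2 yr1 yr2 ys1 ys2 yt1 yt2 p1 p2 q1 q2 r1 r2 s1 s2 t1 t2)/nb)*yt2 + ((kkBim ux uy uz s6 yp1 yp2 yq1 yq2 yr1 yr2 ys1 ys2 yt1 yt2 p1 p2 q1 q2 r1 r2 s1 s2 t1 t2)/nb)*yt1) + t2)
      have hexp := kk_expand ux uy uz s6 t ((kkBre ux uy uz s6 yp1 yp2 yq1 yq2 yr1 yr2 ys1 ys2 yt1 yt2 p1 p2 q1 q2 r1 r2 s1 s2 t1 t2)/nb) ((kkBim ux uy uz s6 yp1 yp2 yq1 yq2 yr1 yr2 ys1 ys2 yt1 yt2 p1 p2 q1 q2 r1 r2 s1 s2 t1 t2)/nb) yp1 yp2 yq1 yq2 yr1 yr2 ys1 ys2 yt1 yt2 p1 p2 q1 q2 r1 r2 s1 s2 t1 t2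
      rw [hexp] at hpos
      have hphi : ((kkBre ux uy uz s6 yp1 yp2 yq1 yq2 yr1 yr2 ys1 ys2 yt1 yt2 p1 p2 q1 q2 r1 r2 s1 s2 t1 t2)/nb)^2 + ((kkBim ux uy uz s6 yp1 yp2 yq1 yq2 yr1 yr2 ys1 ys2 yt1 yt2 p1 p2 q1 q2 r1 r2 s1 s2 t1 t2)/nb)^2 = 1 := by
        have h1 : ((kkBre ux uy uz s6 yp1 yp2 yq1 yq2 yr1 yr2 ys1 ys2 yt1 yt2 p1 p2 q1 q2 r1 r2 s1 s2 t1 t2)/nb)^2 + ((kkBim ux uy uz s6 yp1 yp2 yq1 yq2 yr1 yr2 ys1 ys2 yt1 yt2 p1 p2 q1 q2 r1 r2 s1 s2 t1 t2)/nb)^2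
            = ((kkBre ux uy uz s6 yp1 yp2 yq1 yq2 yr1 yr2 ys1 ys2 yt1 yt2 p1 p2 q1 q2 r1 r2 s1 s2 t1 t2)^2 + (kkBim ux uy uz s6 yp1 yp2 yq1 yq2 yr1 yr2 ys1 ys2 yt1 yt2 p1 p2 q1 q2 r1 r2 s1 s2 t1 t2)^2)/nb^2 := by ring
        rw [h1, ← hnb2]
        exact div_self (pow_ne_zero 2 hnbne)
      have hcross : ((kkBre ux uy uz s6 yp1 yp2 yq1 yq2 yr1 yr2 ys1 ys2 yt1 yt2 p1 p2 q1 q2 r1 r2 s1 s2 t1 t2)/nb) * (kkBre ux uy uz s6 yp1 yp2 yq1 yq2 yr1 yr2 ys1 ys2 yt1 yt2 p1 p2 q1 q2 r1 r2 s1 s2 t1 t2) + ((kkBim ux uy uz s6 yp1 yp2 yq1 yq2 yr1 yr2 ys1 ys2 yt1 yt2 p1 p2 q1 q2 r1 r2 s1 s2 t1 t2)/nb) * (kkBim ux uy uz s6 yp1 yp2 yq1 yq2 yr1 yr2 ys1 ys2 yt1 yt2 p1 p2 q1 q2 r1 r2 s1 s2 t1 t2) = nb := by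
        have h1 : ((kkBre ux uy uz s6 yp1 yp2 yq1 yq2 yr1 yr2 ys1 ys2 yt1 yt2 p1 p2 q1 q2 r1 r2 s1 s2 t1 t2)/nb) * (kkBre ux uy uz s6 yp1 yp2 yq1 yq2 yr1 yr2 ys1 ys2 yt1 yt2 p1 p2 q1 q2 r1 r2 s1 s2 t1 t2) + ((kkBim ux uy uz s6 yp1 yp2 yq1 yq2 yr1 yr2 ys1 ys2 yt1 yt2 p1 p2 q1 q2 r1 r2 s1 s2 t1 t2)/nb) * (kkBim ux uy uz s6 yp1 yp2 yq1 yq2 yr1 yr2 ys1 ys2 yt1 yt2 p1 p2 q1 q2 r1 r2 s1 s2 t1 t2)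
            = ((kkBre ux uy uz s6 yp1 yp2 yq1 yq2 yr1 yr2 ys1 ys2 yt1 yt2 p1 p2 q1 q2 r1 r2 s1 s2 t1 t2)^2 + (kkBim ux uy uz s6 yp1 yp2 yq1 yq2 yr1 yr2 ys1 ys2 yt1 yt2 p1 p2 q1 q2 r1 r2 s1 s2 t1 t2)^2)/nb := by ring
        rw [h1, ← hnb2, pow_two]
        exact mul_div_cancel_left₀ nb hnbne
      rw [hphi, hcross] at hpos
      linarith [hpos]
    have hd := kk_disc (kkQm ux uy uz s6 yp1 yp2 yq1 yq2 yr1 yr2 ys1 ys2 yt1 yt2) nb (kkQm ux uy uz s6 p1 p2 q1 q2 r1 r2 s1 s2 t1 t2) hQy hAll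
    rw [hnb2] at hd
    exact hd

lemma kk_real_key (s6 a1 a2 b1 b2 c1 c2 d1 d2 e1 e2 Vx Vy Vz dr di : ℝ)
    (hs6 : s6^2 = 6)
    (hnorm : a1^2 + a2^2 + b1^2 + b2^2 + c1^2 + c2^2 + d1^2 + d2^2 + e1^2 + e2^2 = 1)
    (hVx : Vx = 2*a1*b1 + 2*a2*b2 + b1*c1*s6 + b2*c2*s6 + c1*d1*s6 + c2*d2*s6 + 2*d1*e1 + 2*d2*e2)
    (hVy : Vy = 2*a1*b2 - 2*a2*b1 + b1*c2*s6 - b2*c1*s6 + c1*d2*s6 - c2*d1*s6 + 2*d1*e2 - 2*d2*e1)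
    (hVz : Vz = 2*a1^2 + 2*a2^2 + b1^2 + b2^2 - d1^2 - d2^2 - 2*e1^2 - 2*e2^2)
    (hdr : dr = 2*a1*e1 - 2*a2*e2 - 2*b1*d1 + 2*b2*d2 + c1^2 - c2^2)
    (hdi : di = 2*a1*e2 + 2*a2*e1 - 2*b1*d2 - 2*b2*d1 + 2*c1*c2)
    (hD : dr^2 + di^2 ≤ 1) :
    Vx^2 + Vy^2 + Vz^2 + 4*(dr^2 + di^2) ≤ 4 := by
  rcases eq_or_lt_of_le (show (0:ℝ) ≤ Vx^2+Vy^2+Vz^2 by positivity) with h0 | hpos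
  · linarith [hD, h0]
  · set ρ := Real.sqrt (Vx^2+Vy^2+Vz^2) with hρdef
    have hρpos : 0 < ρ := Real.sqrt_pos.mpr hpos
    have hρne : ρ ≠ 0 := ne_of_gt hρpos
    have hρ2 : ρ^2 = Vx^2+Vy^2+Vz^2 := Real.sq_sqrt (le_of_lt hpos)
    set ux := Vx/ρ with huxd
    set uy := Vy/ρ with huyd
    set uz := Vz/ρ with huzd
    have hux : ρ * ux = Vx := by rw [huxd]; field_simp
    have huy : ρ * uy = Vy := by rw [huyd]; field_simp
    have huz : ρ * uz = Vz := by rw [huzd]; field_simp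
    have h9 : ρ^2*(ux^2+uy^2+uz^2) = ρ^2*1 := by
      linear_combination (ρ*ux+Vx)*hux + (ρ*uy+Vy)*huy + (ρ*uz+Vz)*huz - hρ2
    have hu : ux^2+uy^2+uz^2 = 1 := mul_left_cancel₀ (pow_ne_zero 2 hρne) h9
    have hu' : (-ux)^2+(-uy)^2+(-uz)^2 = 1 := by linear_combination hu
    have eQx : kkQm ux uy uz s6 a1 a2 b1 b2 c1 c2 d1 d2 e1 e2 = 2 - ρ := by
      simp only [kkQm]
      linear_combination 2*hnorm + ux*hVx + uy*hVy + uz*hVz + ux*hux + uy*huy + uz*huz - ρ*hu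
    have eQy : kkQm ux uy uz s6 e1 (-e2) (-d1) d2 c1 (-c2) (-b1) b2 a1 (-a2) = 2 + ρ := by
      simp only [kkQm]
      linear_combination 2*hnorm - ux*hVx - uy*hVy - uz*hVz - ux*hux - uy*huy - uz*huz + ρ*hu
    have eQx' : kkQm (-ux) (-uy) (-uz) s6 a1 a2 b1 b2 c1 c2 d1 d2 e1 e2 = 2 + ρ := by
      simp only [kkQm]
      linear_combination 2*hnorm - ux*hVx - uy*hVy - uz*hVz - ux*hux - uy*huy - uz*huz + ρ*hu
    have eQy' : kkQm (-ux) (-uy) (-uz) s6 e1 (-e2) (-d1) d2 c1 (-c2) (-b1) b2 a1 (-a2) = 2 - ρ := by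
      simp only [kkQm]
      linear_combination 2*hnorm + ux*hVx + uy*hVy + uz*hVz + ux*hux + uy*huy + uz*huz - ρ*hu
    have cs1 := kk_cs ux uy uz s6 hu hs6 e1 (-e2) (-d1) d2 c1 (-c2) (-b1) b2 a1 (-a2) a1 a2 b1 b2 c1 c2 d1 d2 e1 e2
    have cs2 := kk_cs (-ux) (-uy) (-uz) s6 hu' hs6 e1 (-e2) (-d1) d2 c1 (-c2) (-b1) b2 a1 (-a2) a1 a2 b1 b2 c1 c2 d1 d2 e1 e2
    rw [eQx, eQy] at cs1
    rw [eQx', eQy'] at cs2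
    obtain ⟨B1r, hg1⟩ : ∃ x, kkBre ux uy uz s6 e1 (-e2) (-d1) d2 c1 (-c2) (-b1) b2 a1 (-a2) a1 a2 b1 b2 c1 c2 d1 d2 e1 e2 = x := ⟨_, rfl⟩
    obtain ⟨B2r, hg2⟩ : ∃ x, kkBre (-ux) (-uy) (-uz) s6 e1 (-e2) (-d1) d2 c1 (-c2) (-b1) b2 a1 (-a2) a1 a2 b1 b2 c1 c2 d1 d2 e1 e2 = x := ⟨_, rfl⟩
    obtain ⟨B1i, hg3⟩ : ∃ x, kkBim ux uy uz s6 e1 (-e2) (-d1) d2 c1 (-c2) (-b1) b2 a1 (-a2) a1 a2 b1 b2 c1 c2 d1 d2 e1 e2 = x := ⟨_, rfl⟩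
    obtain ⟨B2i, hg4⟩ : ∃ x, kkBim (-ux) (-uy) (-uz) s6 e1 (-e2) (-d1) d2 c1 (-c2) (-b1) b2 a1 (-a2) a1 a2 b1 b2 c1 c2 d1 d2 e1 e2 = x := ⟨_, rfl⟩
    have hBre : B1r + B2r = 4*dr := by
      rw [← hg1, ← hg2]; simp only [kkBre]; rw [hdr]; ring
    have hBim : B1i + B2i = 4*di := by
      rw [← hg3, ← hg4]; simp only [kkBim]; rw [hdi]; ring
    rw [hg1, hg3] at cs1
    rw [hg2, hg4] at cs2
    have hsr : (B1r + B2r)^2 = 16*dr^2 := by rw [hBre]; ring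
    have hsi : (B1i + B2i)^2 = 16*di^2 := by rw [hBim]; ring
    have hsum2 : 16*(dr^2+di^2) ≤ 4*(4 - ρ^2) := by
      linarith [cs1, cs2, hsr, hsi, sq_nonneg (B1r - B2r), sq_nonneg (B1i - B2i)]
    linarith [hsum2, hρ2]

lemma kk_key (z2 z1 z0 zm1 zm2 : ℂ)
    (hn : ‖z2‖ ^ 2 + ‖z1‖ ^ 2 + ‖z0‖ ^ 2
      + ‖zm1‖ ^ 2 + ‖zm2‖ ^ 2 = 1) :
    (2 * ‖z2‖ ^ 2 + ‖z1‖ ^ 2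
      - ‖zm1‖ ^ 2 - 2 * ‖zm2‖ ^ 2)^2
    + ‖tauC z2 z1 z0 zm1 zm2‖ ^ 2
    + 4 * ‖deltaC z2 z1 z0 zm1 zm2‖ ^ 2 ≤ 4 := by
  have habs : ∀ z : ℂ, ‖z‖ ^ 2 = z.re^2 + z.im^2 := fun z => by
    rw [Complex.sq_norm, Complex.normSq_apply]; ring
  have hs6 : (Real.sqrt 6)^2 = 6 := Real.sq_sqrt (by norm_num)
  have hn' : z2.re^2 + z2.im^2 + z1.re^2 + z1.im^2 + z0.re^2 + z0.im^2
      + zm1.re^2 + zm1.im^2 + zm2.re^2 + zm2.im^2 = 1 := by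
    have h0 := hn
    rw [habs z2, habs z1, habs z0, habs zm1, habs zm2] at h0
    linarith [h0]
  have hd1 : ‖deltaC z2 z1 z0 zm1 zm2‖ ≤ 1 := by
    have e1 : deltaC z2 z1 z0 zm1 zm2 = 2*z2*zm2 + (-(2*z1*zm1)) + z0^2 := by
      simp only [deltaC]; ring
    rw [e1]
    have step1 : ‖2*z2*zm2 + (-(2*z1*zm1)) + z0^2‖
        ≤ ‖2*z2*zm2‖ + ‖-(2*z1*zm1)‖ + ‖z0^2‖ :=
      le_trans (norm_add_le _ _) (add_le_add_left (norm_add_le _ _) _)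
    have step2 : ‖2*z2*zm2‖ + ‖-(2*z1*zm1)‖ + ‖z0^2‖
        = 2*‖z2‖*‖zm2‖ + 2*‖z1‖*‖zm1‖
          + ‖z0‖^2 := by
      rw [norm_neg]
      simp only [norm_mul, norm_pow, Complex.norm_two]
    rw [step2] at step1
    refine le_trans step1 ?_
    nlinarith [hn, sq_nonneg (‖z2‖ - ‖zm2‖),
      sq_nonneg (‖z1‖ - ‖zm1‖),
      norm_nonneg z2, norm_nonneg z1, norm_nonneg z0,
      norm_nonneg zm1, norm_nonneg zm2]
  have hD' : (deltaC z2 z1 z0 zm1 zm2).re^2 + (deltaC z2 z1 z0 zm1 zm2).im^2 ≤ 1 := by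
    have h2 : ‖deltaC z2 z1 z0 zm1 zm2‖^2 ≤ 1 := by
      nlinarith [norm_nonneg (deltaC z2 z1 z0 zm1 zm2), hd1]
    rw [habs] at h2; exact h2
  have hVx : (tauC z2 z1 z0 zm1 zm2).re = 2*z2.re*z1.re + 2*z2.im*z1.im + z1.re*z0.re*(Real.sqrt 6) + z1.im*z0.im*(Real.sqrt 6) + z0.re*zm1.re*(Real.sqrt 6) + z0.im*zm1.im*(Real.sqrt 6) + 2*zm1.re*zm2.re + 2*zm1.im*zm2.im := by
    simp only [tauC, Complex.add_re, Complex.add_im, Complex.mul_re, Complex.mul_im,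
      Complex.conj_re, Complex.conj_im, Complex.ofReal_re, Complex.ofReal_im,
      Complex.re_ofNat, Complex.im_ofNat]
    ring
  have hVy : (tauC z2 z1 z0 zm1 zm2).im = 2*z2.re*z1.im - 2*z2.im*z1.re + z1.re*z0.im*(Real.sqrt 6) - z1.im*z0.re*(Real.sqrt 6) + z0.re*zm1.im*(Real.sqrt 6) - z0.im*zm1.re*(Real.sqrt 6) + 2*zm1.re*zm2.im - 2*zm1.im*zm2.re := by
    simp only [tauC, Complex.add_re, Complex.add_im, Complex.mul_re, Complex.mul_im,
      Complex.conj_re, Complex.conj_im, Complex.ofReal_re, Complex.ofReal_im,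
      Complex.re_ofNat, Complex.im_ofNat]
    ring
  have hVz : 2 * ‖z2‖ ^ 2 + ‖z1‖ ^ 2
      - ‖zm1‖ ^ 2 - 2 * ‖zm2‖ ^ 2 = 2*z2.re^2 + 2*z2.im^2 + z1.re^2 + z1.im^2 - zm1.re^2 - zm1.im^2 - 2*zm2.re^2 - 2*zm2.im^2 := by
    rw [habs z2, habs z1, habs zm1, habs zm2]; ring
  have hdr : (deltaC z2 z1 z0 zm1 zm2).re = 2*z2.re*zm2.re - 2*z2.im*zm2.im - 2*z1.re*zm1.re + 2*z1.im*zm1.im + z0.re^2 - z0.im^2 := by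
    simp only [deltaC, pow_two, Complex.add_re, Complex.add_im, Complex.sub_re,
      Complex.sub_im, Complex.mul_re, Complex.mul_im, Complex.re_ofNat, Complex.im_ofNat]
    ring
  have hdi : (deltaC z2 z1 z0 zm1 zm2).im = 2*z2.re*zm2.im + 2*z2.im*zm2.re - 2*z1.re*zm1.im - 2*z1.im*zm1.re + 2*z0.re*z0.im := by
    simp only [deltaC, pow_two, Complex.add_re, Complex.add_im, Complex.sub_re,
      Complex.sub_im, Complex.mul_re, Complex.mul_im, Complex.re_ofNat, Complex.im_ofNat]
    ring
  have hres := kk_real_key (Real.sqrt 6) z2.re z2.im z1.re z1.im z0.re z0.im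
    zm1.re zm1.im zm2.re zm2.im
    ((tauC z2 z1 z0 zm1 zm2).re) ((tauC z2 z1 z0 zm1 zm2).im)
    (2 * ‖z2‖ ^ 2 + ‖z1‖ ^ 2
      - ‖zm1‖ ^ 2 - 2 * ‖zm2‖ ^ 2)
    ((deltaC z2 z1 z0 zm1 zm2).re) ((deltaC z2 z1 z0 zm1 zm2).im)
    hs6 hn' hVx hVy hVz hdr hdi hD'
  rw [habs (tauC z2 z1 z0 zm1 zm2), habs (deltaC z2 z1 z0 zm1 zm2)]
  linarith [hres]

lemma kk_tau_cast (x2 x1 x0 xm1 xm2 : ℝ) :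
    tauC (x2:ℂ) (x1:ℂ) (x0:ℂ) (xm1:ℂ) (xm2:ℂ)
      = ((2*(x2*x1+xm1*xm2) + Real.sqrt 6*(x1*x0+x0*xm1) : ℝ) : ℂ) := by
  simp only [tauC, Complex.conj_ofReal]
  push_cast
  ring

lemma kk_delta_cast (x2 x1 x0 xm1 xm2 : ℝ) :
    deltaC (x2:ℂ) (x1:ℂ) (x0:ℂ) (xm1:ℂ) (xm2:ℂ)
      = ((2*x2*xm2 - 2*x1*xm1 + x0^2 : ℝ) : ℂ) := by
  simp only [deltaC]
  push_cast
  ring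

lemma kk_constr (s6 A B E C S M T D : ℝ) (hs6 : s6^2 = 6)
    (hABE : A^2+B^2+E^2 = 1) (hCS : C^2+S^2 = 1)
    (hM : 2*(A^2-E^2)*(C^2-S^2) = M) (hT : 4*(A^2-E^2)*(C*S) = T)
    (hD : 2*A*E+B^2 = D) :
    ((A*C^4 + B*C^2*S^2*s6 + E*S^4)^2 + (2*A*C^3*S + B*C*S^3*s6 - B*C^3*S*s6 - 2*C*E*S^3)^2 + (A*C^2*S^2*s6 + (-1/2)*B - 3*B*C^2*S^2 + (3/2)*B*C^4 + (3/2)*B*S^4 + C^2*E*S^2*s6)^2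
      + (2*A*C*S^3 - B*C*S^3*s6 + B*C^3*S*s6 - 2*C^3*E*S)^2 + (A*S^4 + B*C^2*S^2*s6 + C^4*E)^2 = 1) ∧
    (2*(A*C^4 + B*C^2*S^2*s6 + E*S^4)^2 + (2*A*C^3*S + B*C*S^3*s6 - B*C^3*S*s6 - 2*C*E*S^3)^2 - (2*A*C*S^3 - B*C*S^3*s6 + B*C^3*S*s6 - 2*C^3*E*S)^2
      - 2*(A*S^4 + B*C^2*S^2*s6 + C^4*E)^2 = M) ∧
    (2*((A*C^4 + B*C^2*S^2*s6 + E*S^4)*(2*A*C^3*S + B*C*S^3*s6 - B*C^3*S*s6 - 2*C*E*S^3) + (2*A*C*S^3 - B*C*S^3*s6 + B*C^3*S*s6 - 2*C^3*E*S)*(A*S^4 + B*C^2*S^2*s6 + C^4*E))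
      + s6*((2*A*C^3*S + B*C*S^3*s6 - B*C^3*S*s6 - 2*C*E*S^3)*(A*C^2*S^2*s6 + (-1/2)*B - 3*B*C^2*S^2 + (3/2)*B*C^4 + (3/2)*B*S^4 + C^2*E*S^2*s6) + (A*C^2*S^2*s6 + (-1/2)*B - 3*B*C^2*S^2 + (3/2)*B*C^4 + (3/2)*B*S^4 + C^2*E*S^2*s6)*(2*A*C*S^3 - B*C*S^3*s6 + B*C^3*S*s6 - 2*C^3*E*S)) = T) ∧
    (2*(A*C^4 + B*C^2*S^2*s6 + E*S^4)*(A*S^4 + B*C^2*S^2*s6 + C^4*E) - 2*(2*A*C^3*S + B*C*S^3*s6 - B*C^3*S*s6 - 2*C*E*S^3)*(2*A*C*S^3 - B*C*S^3*s6 + B*C^3*S*s6 - 2*C^3*E*S)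
      + (A*C^2*S^2*s6 + (-1/2)*B - 3*B*C^2*S^2 + (3/2)*B*C^4 + (3/2)*B*S^4 + C^2*E*S^2*s6)^2 = D) := by
  refine ⟨?_, ?_, ?_, ?_⟩
  · linear_combination (2*A*C^4*E*S^4 + A^2*C^4*S^4 + 2*B^2*C^2*S^6 - 2*B^2*C^4*S^4 + 2*B^2*C^6*S^2 + C^4*E^2*S^4) * hs6 + (A*B*C^2*S^2*s6 + A*B*C^2*S^4*s6 + A*B*C^4*S^2*s6 + A^2 + A^2*C^2 + 2*A^2*C^2*S^2 + 3*A^2*C^2*S^4 + A^2*C^4 + 3*A^2*C^4*S^2 + A^2*C^6 + A^2*S^2 + A^2*S^4 + A^2*S^6 + B*C^2*E*S^2*s6 + B*C^2*E*S^4*s6 + B*C^4*E*S^2*s6 + (3/4)*B^2 + (3/4)*B^2*C^2 + (-3/2)*B^2*C^2*S^2 + (3/4)*B^2*C^2*S^4 + (9/4)*B^2*C^4 + (3/4)*B^2*C^4*S^2 + (9/4)*B^2*C^6 + (3/4)*B^2*S^2 + (9/4)*B^2*S^4 + (9/4)*B^2*S^6 + C^2*E^2 + 2*C^2*E^2*S^2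 + 3*C^2*E^2*S^4 + C^4*E^2 + 3*C^4*E^2*S^2 + C^6*E^2 + E^2 + E^2*S^2 + E^2*S^4 + E^2*S^6) * hCS + (1) * hABE
  · linear_combination (2*A^2*C^2 - 2*A^2*C^2*S^4 + 2*A^2*C^4 + 2*A^2*C^4*S^2 + 2*A^2*C^6 - 2*A^2*S^2 - 2*A^2*S^4 - 2*A^2*S^6 - 2*C^2*E^2 + 2*C^2*E^2*S^4 - 2*C^4*E^2 - 2*C^4*E^2*S^2 - 2*C^6*E^2 + 2*E^2*S^2 + 2*E^2*S^4 + 2*E^2*S^6) * hCS + hM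
  · linear_combination (2*A^2*C^3*S^5 + 2*A^2*C^5*S^3 - 2*C^3*E^2*S^5 - 2*C^5*E^2*S^3) * hs6 + (A*B*C*S^3*s6 + A*B*C*S^5*s6 + A*B*C^3*S*s6 + 2*A*B*C^3*S^3*s6 + A*B*C^5*S*s6 + 4*A^2*C*S + 4*A^2*C*S^3 + 4*A^2*C*S^5 + 4*A^2*C^3*S + 8*A^2*C^3*S^3 + 4*A^2*C^5*S - B*C*E*S^3*s6 - B*C*E*S^5*s6 - B*C^3*E*S*s6 - 2*B*C^3*E*S^3*s6 - B*C^5*E*S*s6 - 4*C*E^2*S - 4*C*E^2*S^3 - 4*C*E^2*S^5 - 4*C^3*E^2*S - 8*C^3*E^2*S^3 - 4*C^5*E^2*S) * hCS + hT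
  · linear_combination (2*A*C^4*E*S^4 + A^2*C^4*S^4 + 2*B^2*C^2*S^6 - 2*B^2*C^4*S^4 + 2*B^2*C^6*S^2 + C^4*E^2*S^4) * hs6 + (A*B*C^2*S^2*s6 + A*B*C^2*S^4*s6 + A*B*C^4*S^2*s6 + 2*A*C^2*E + 4*A*C^2*E*S^2 + 6*A*C^2*E*S^4 + 2*A*C^4*E + 6*A*C^4*E*S^2 + 2*A*C^6*E + 2*A*E + 2*A*E*S^2 + 2*A*E*S^4 + 2*A*E*S^6 + B*C^2*E*S^2*s6 + B*C^2*E*S^4*s6 + B*C^4*E*S^2*s6 + (3/4)*B^2 + (3/4)*B^2*C^2 + (-3/2)*B^2*C^2*S^2 + (3/4)*B^2*C^2*S^4 + (9/4)*B^2*C^4 + (3/4)*B^2*C^4*S^2 + (9/4)*B^2*C^6 + (3/4)*B^2*S^2 + (9/4)*B^2*S^4 + (9/4)*B^2*S^6) * hCS + hD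


theorem stmt4 (M : ℝ) (hM0 : 0 ≤ M) (hM2 : M ≤ 2) (z2 z1 z0 zm1 zm2 : ℂ)
    (h : memSC M z2 z1 z0 zm1 zm2) :
    ∃ r2 r1 r0 rm1 rm2 : ℝ,
      memSC M (r2 : ℂ) (r1 : ℂ) (r0 : ℂ) (rm1 : ℂ) (rm2 : ℂ) ∧
      tauC (r2 : ℂ) (r1 : ℂ) (r0 : ℂ) (rm1 : ℂ) (rm2 : ℂ)
        = (‖tauC z2 z1 z0 zm1 zm2‖ : ℂ) ∧
      deltaC (r2 : ℂ) (r1 : ℂ) (r0 : ℂ) (rm1 : ℂ) (rm2 : ℂ)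
        = (‖deltaC z2 z1 z0 zm1 zm2‖ : ℂ) ∧
      ∀ b0 b1 b2 : ℝ,
        EU b0 b1 b2 M (r2 : ℂ) (r1 : ℂ) (r0 : ℂ) (rm1 : ℂ) (rm2 : ℂ)
          = EU b0 b1 b2 M z2 z1 z0 zm1 zm2 := by
  obtain ⟨hn, hM⟩ := h
  have habsr : ∀ r : ℝ, ‖(r:ℂ)‖^2 = r^2 := fun r => by
    rw [Complex.sq_norm, Complex.normSq_ofReal]; ring
  obtain ⟨T, hTd⟩ : ∃ x, x = ‖tauC z2 z1 z0 zm1 zm2‖ := ⟨_, rfl⟩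
  obtain ⟨D, hDd⟩ : ∃ x, x = ‖deltaC z2 z1 z0 zm1 zm2‖ := ⟨_, rfl⟩
  have hT0 : 0 ≤ T := by rw [hTd]; exact norm_nonneg _
  have hD0 : 0 ≤ D := by rw [hDd]; exact norm_nonneg _
  have hkey0 := kk_key z2 z1 z0 zm1 zm2 hn
  rw [← hTd, ← hDd, hM] at hkey0
  have hkey : M^2 + T^2 + 4*D^2 ≤ 4 := by linarith [hkey0]
  rcases lt_or_ge D 1 with hD1 | hD1
  · -- main construction
    have h1D : 0 < 1 - D := by linarith
    obtain ⟨K, hKd⟩ : ∃ x : ℝ, x = Real.sqrt (M^2+T^2)/2 := ⟨_, rfl⟩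
    have hK0 : 0 ≤ K := by rw [hKd]; positivity
    have hK4 : 4*K^2 = M^2+T^2 := by
      rw [hKd, div_pow, Real.sq_sqrt (by positivity : (0:ℝ) ≤ M^2+T^2)]; ring
    have hKD : K^2 + D^2 ≤ 1 := by linarith [hkey, hK4]
    obtain ⟨hh, hhd⟩ : ∃ x : ℝ, x = ((1-D)^2 + K^2)/(2*(1-D)) := ⟨_, rfl⟩
    have hhdef : hh*(2*(1-D)) = (1-D)^2 + K^2 := by
      rw [hhd]; exact div_mul_cancel₀ _ (ne_of_gt (by linarith : (0:ℝ) < 2*(1-D)))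
    have hhK : K ≤ hh := by
      rw [hhd, le_div_iff₀ (by linarith : (0:ℝ) < 2*(1-D))]
      linarith [sq_nonneg (1-D-K)]
    have hh1 : hh ≤ 1 := by
      rw [hhd, div_le_one (by linarith : (0:ℝ) < 2*(1-D))]
      linarith [hKD, sq_nonneg D]
    have hhpos : 0 < hh := by
      rw [hhd]
      exact div_pos (by linarith [pow_pos h1D 2, sq_nonneg K]) (by linarith)
    obtain ⟨A, hAd⟩ : ∃ x : ℝ, x = Real.sqrt ((hh+K)/2) := ⟨_, rfl⟩
    have hA2 : A^2 = (hh+K)/2 := by rw [hAd]; exact Real.sq_sqrt (by linarith)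
    have hApos : 0 < A := by rw [hAd]; exact Real.sqrt_pos.mpr (by linarith)
    have hAne : A ≠ 0 := ne_of_gt hApos
    obtain ⟨Bq, hBd⟩ : ∃ x : ℝ, x = Real.sqrt (1-hh) := ⟨_, rfl⟩
    have hB2 : Bq^2 = 1-hh := by rw [hBd]; exact Real.sq_sqrt (by linarith)
    obtain ⟨Ee, hEd⟩ : ∃ x : ℝ, x = (D-1+hh)/(2*A) := ⟨_, rfl⟩
    have hsq : (D-1+hh)^2 = hh^2 - K^2 := by linear_combination -hhdef
    have h2Ane : (2*A) ≠ 0 := ne_of_gt (by linarith)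
    have hE2 : Ee^2 = (hh-K)/2 := by
      rw [hEd, div_pow, hsq]
      rw [show (2*A)^2 = 2*(hh+K) from by rw [mul_pow, hA2]; ring]
      rw [div_eq_div_iff (ne_of_gt (by linarith : (0:ℝ) < 2*(hh+K))) (two_ne_zero)]
      ring
    have hEA : 2*A*Ee = D-1+hh := by
      rw [hEd, mul_comm]; exact div_mul_cancel₀ _ h2Ane
    have hABE : A^2+Bq^2+Ee^2 = 1 := by rw [hA2, hB2, hE2]; ring
    have hKAE : A^2 - Ee^2 = K := by rw [hA2, hE2]; ring
    have hDD : 2*A*Ee + Bq^2 = D := by rw [hB2]; linarith [hEA]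
    have hs6 : (Real.sqrt 6)^2 = 6 := Real.sq_sqrt (by norm_num)
    obtain ⟨Cc, Sc, hCS, hMt, hTt⟩ : ∃ Cc Sc : ℝ, Cc^2+Sc^2 = 1 ∧
        2*(A^2-Ee^2)*(Cc^2-Sc^2) = M ∧ 4*(A^2-Ee^2)*(Cc*Sc) = T := by
      rcases eq_or_lt_of_le hK0 with hKz | hKpos
      · have hMT : M^2 + T^2 = 0 := by rw [← hK4, ← hKz]; norm_num
        have hM2z : M^2 = 0 := le_antisymm (by linarith [hMT, sq_nonneg T]) (sq_nonneg M)
        have hT2z : T^2 = 0 := le_antisymm (by linarith [hMT, sq_nonneg M]) (sq_nonneg T)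
        have hM0' : M = 0 := pow_eq_zero_iff (by norm_num : 2 ≠ 0) |>.mp hM2z
        have hT0' : T = 0 := pow_eq_zero_iff (by norm_num : 2 ≠ 0) |>.mp hT2z
        refine ⟨1, 0, by norm_num, ?_, ?_⟩
        · rw [hKAE, ← hKz, hM0']; norm_num
        · rw [hT0']; ring
      · have hKne : K ≠ 0 := ne_of_gt hKpos
        have h2KM : 0 < 2*K + M := by linarith
        obtain ⟨Cc, hCd⟩ : ∃ x : ℝ, x = Real.sqrt ((2*K+M)/(4*K)) := ⟨_, rfl⟩
        have hC2 : Cc^2 = (2*K+M)/(4*K) := by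
          rw [hCd]; exact Real.sq_sqrt (div_nonneg (by linarith) (by linarith))
        have hCpos : 0 < Cc := by
          rw [hCd]; exact Real.sqrt_pos.mpr (div_pos (by linarith) (by linarith))
        have hCne : Cc ≠ 0 := ne_of_gt hCpos
        obtain ⟨Sc, hSd⟩ : ∃ x : ℝ, x = T/(4*K*Cc) := ⟨_, rfl⟩
        have hS2 : Sc^2 = (2*K-M)/(4*K) := by
          rw [hSd, div_pow]
          rw [show (4*K*Cc)^2 = 4*K*(2*K+M) from by
            rw [mul_pow, hC2]; field_simp]
          rw [div_eq_div_iff (ne_of_gt (mul_pos (by linarith : (0:ℝ) < 4*K) h2KM))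
            (ne_of_gt (by linarith : (0:ℝ) < 4*K))]
          linear_combination (-(4*K))*hK4
        have hCS : Cc^2+Sc^2 = 1 := by
          rw [hC2, hS2, ← add_div, div_eq_one_iff_eq (ne_of_gt (by linarith : (0:ℝ) < 4*K))]
          ring
        refine ⟨Cc, Sc, hCS, ?_, ?_⟩
        · rw [hKAE, hC2, hS2]
          field_simp
          ring
        · rw [hKAE, hSd]
          field_simp

    have hcon := kk_constr (Real.sqrt 6) A Bq Ee Cc Sc M T D hs6 hABE hCS hMt hTt hDD
    obtain ⟨hc1, hc2, hc3, hc4⟩ := hcon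
    obtain ⟨vr2, hvr2⟩ : ∃ x : ℝ, A*Cc^4 + Bq*Cc^2*Sc^2*(Real.sqrt 6) + Ee*Sc^4 = x := ⟨_, rfl⟩
    obtain ⟨vr1, hvr1⟩ : ∃ x : ℝ, 2*A*Cc^3*Sc + Bq*Cc*Sc^3*(Real.sqrt 6) - Bq*Cc^3*Sc*(Real.sqrt 6) - 2*Cc*Ee*Sc^3 = x := ⟨_, rfl⟩
    obtain ⟨vr0, hvr0⟩ : ∃ x : ℝ, A*Cc^2*Sc^2*(Real.sqrt 6) + (-1/2)*Bq - 3*Bq*Cc^2*Sc^2 + (3/2)*Bq*Cc^4 + (3/2)*Bq*Sc^4 + Cc^2*Ee*Sc^2*(Real.sqrt 6) = x := ⟨_, rfl⟩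
    obtain ⟨vrm1, hvrm1⟩ : ∃ x : ℝ, 2*A*Cc*Sc^3 - Bq*Cc*Sc^3*(Real.sqrt 6) + Bq*Cc^3*Sc*(Real.sqrt 6) - 2*Cc^3*Ee*Sc = x := ⟨_, rfl⟩
    obtain ⟨vrm2, hvrm2⟩ : ∃ x : ℝ, A*Sc^4 + Bq*Cc^2*Sc^2*(Real.sqrt 6) + Cc^4*Ee = x := ⟨_, rfl⟩
    simp only [hvr2, hvr1, hvr0, hvrm1, hvrm2] at hc1 hc2 hc3 hc4
    have hτC : tauC (vr2:ℂ) (vr1:ℂ) (vr0:ℂ) (vrm1:ℂ) (vrm2:ℂ) = ((T:ℝ):ℂ) := by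
      rw [kk_tau_cast]; exact_mod_cast hc3
    have hδC : deltaC (vr2:ℂ) (vr1:ℂ) (vr0:ℂ) (vrm1:ℂ) (vrm2:ℂ) = ((D:ℝ):ℂ) := by
      rw [kk_delta_cast]; exact_mod_cast hc4
    have hτabs : ‖tauC (vr2:ℂ) (vr1:ℂ) (vr0:ℂ) (vrm1:ℂ) (vrm2:ℂ)‖ = T := by
      rw [hτC, Complex.norm_real, Real.norm_eq_abs, abs_of_nonneg hT0]
    have hδabs : ‖deltaC (vr2:ℂ) (vr1:ℂ) (vr0:ℂ) (vrm1:ℂ) (vrm2:ℂ)‖ = D := by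
      rw [hδC, Complex.norm_real, Real.norm_eq_abs, abs_of_nonneg hD0]
    refine ⟨vr2, vr1, vr0, vrm1, vrm2, ⟨?_, ?_⟩, ?_, ?_, ?_⟩
    · simp only [habsr]; exact hc1
    · simp only [habsr]; exact hc2
    · rw [← hTd]; exact hτC
    · rw [← hDd]; exact hδC
    · intro b0 b1 b2
      simp only [EU]
      rw [hτabs, hδabs, hTd, hDd]
  · -- degenerate branch D = 1
    have hD2sq : D^2 ≤ 1 := by linarith [hkey, sq_nonneg M, sq_nonneg T]
    have hDle : D ≤ 1 := (pow_le_one_iff_of_nonneg hD0 (by norm_num : 2 ≠ 0)).mp hD2sq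
    have hD2 : D = 1 := le_antisymm hDle hD1
    rw [hD2] at hkey
    have hM2z : M^2 = 0 :=
      le_antisymm (by linarith [hkey, sq_nonneg T]) (sq_nonneg M)
    have hT2z : T^2 = 0 :=
      le_antisymm (by linarith [hkey, sq_nonneg M]) (sq_nonneg T)
    have hM0' : M = 0 := pow_eq_zero_iff (by norm_num : 2 ≠ 0) |>.mp hM2z
    have hT0' : T = 0 := pow_eq_zero_iff (by norm_num : 2 ≠ 0) |>.mp hT2z
    have hτa : ‖tauC ((0:ℝ):ℂ) ((0:ℝ):ℂ) ((1:ℝ):ℂ) ((0:ℝ):ℂ) ((0:ℝ):ℂ)‖ = T := by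
      rw [kk_tau_cast, Complex.norm_real, hT0']
      norm_num
    have hδa : ‖deltaC ((0:ℝ):ℂ) ((0:ℝ):ℂ) ((1:ℝ):ℂ) ((0:ℝ):ℂ) ((0:ℝ):ℂ)‖ = D := by
      rw [kk_delta_cast, Complex.norm_real, hD2]
      norm_num
    refine ⟨0, 0, 1, 0, 0, ⟨?_, ?_⟩, ?_, ?_, ?_⟩
    · simp only [habsr]; norm_num
    · simp only [habsr]; norm_num; linarith [hM0']
    · rw [← hTd, kk_tau_cast, hT0']; norm_num
    · rw [← hDd, kk_delta_cast, hD2]; norm_num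
    · intro b0 b1 b2
      simp only [EU]
      rw [hτa, hδa, hTd, hDd]
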